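/- Let ε_c < 0 with ε_c ≠ -1, and set λ₀ = (ε_c + 1)/(2(ε_c - 1)), so that λ₀ ∈ (-1/2, 0) ∪ (0, 1/2). For δ > 0 set λ(δ) = (ε_c + 1 + iδ)/(2(ε_c - 1) + 2iδ) ∈ ℂ. Let Q : ℝ → [0, ∞) be Lebesgue integrable, vanish outside [-1/2, 1/2], and be continuous at λ₀. Then lim_{δ → 0⁺} δ ∫_{-1/2}^{1/2} Q(t)/|λ(δ) - t|² dt = π |ε_c - 1| Q(λ₀) / (1/2 - λ₀). In particular the spectral quantity δ‖φ^δ‖²_{-1/2} = δ ∫ Q(t)/|λ(δ)-t|² dt converges to a finite limit proportional to Q(λ₀) as the dissipation δ tends to 0. -/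

import Mathlib

open MeasureTheory Set Filter Real

set_option maxHeartbeats 1000000

noncomputable section

/-- `λ(δ) = (ε_c + 1 + iδ)/(2(ε_c - 1) + 2iδ)`. -/
def lamPlasmon (εc δ : ℝ) : ℂ :=
  ((εc : ℂ) + 1 + Complex.I * δ) / (2 * ((εc : ℂ) - 1) + 2 * Complex.I * δ)

/-- `λ₀ = (ε_c + 1)/(2(ε_c - 1))`. -/
def lam0 (εc : ℝ) : ℝ := (εc + 1) / (2 * (εc - 1))

/-- Exact arctangent formula for the integral of the Poisson kernel over an interval. -/
lemma poisson_arctan {a c : ℝ} (hc : 0 < c) (u v : ℝ) (huv : u ≤ v) :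
    ∫ t in Ioo u v, c / ((a - t) ^ 2 + c ^ 2) =
      arctan ((v - a) / c) - arctan ((u - a) / c) := by
  have key : (∫ t in u..v, c / ((a - t) ^ 2 + c ^ 2))
      = c⁻¹ * ∫ t in u..v, (fun y => 1 / (1 + (y / c) ^ 2)) (t - a) := by
    rw [← intervalIntegral.integral_const_mul]
    refine intervalIntegral.integral_congr fun t _ => ?_
    show c / ((a - t) ^ 2 + c ^ 2) = c⁻¹ * (1 / (1 + ((t - a) / c) ^ 2))
    have h2 : (a - t) ^ 2 + c ^ 2 ≠ 0 := by positivity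
    field_simp
    ring
  rw [← integral_Ioc_eq_integral_Ioo, ← intervalIntegral.integral_of_le huv, key,
    intervalIntegral.integral_comp_sub_right (fun y => 1 / (1 + (y / c) ^ 2)) a,
    intervalIntegral.inv_mul_integral_comp_div (f := fun x => 1 / (1 + x ^ 2)) c,
    integral_one_div_one_add_sq]

/-- Poisson-kernel approximate identity: if `a δ → x₀`, `c δ → 0⁺`, then
`∫ c δ/((a δ - t)² + c δ²) Q(t) dt → π Q(x₀)` provided `Q` is integrable and
continuous at `x₀`. -/
lemma poisson_limit (Q : ℝ → ℝ) (hQint : Integrable Q) (x₀ : ℝ)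
    (hQcont : ContinuousAt Q x₀) (a c : ℝ → ℝ)
    (ha : Tendsto a (nhdsWithin 0 (Ioi 0)) (nhds x₀))
    (hc : Tendsto c (nhdsWithin 0 (Ioi 0)) (nhds 0))
    (hcpos : ∀ᶠ δ in nhdsWithin 0 (Ioi 0), 0 < c δ) :
    Tendsto (fun δ => ∫ t, c δ / ((a δ - t) ^ 2 + c δ ^ 2) * Q t)
      (nhdsWithin 0 (Ioi 0)) (nhds (π * Q x₀)) := by
  set l := nhdsWithin (0 : ℝ) (Ioi 0) with hl
  rw [Metric.tendsto_nhds]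
  intro ε hε
  set M := ∫ t, |Q t| with hM
  have hM0 : 0 ≤ M := integral_nonneg fun t => abs_nonneg _
  have hπ : (0 : ℝ) < π := pi_pos
  set ε' : ℝ := ε / (4 * (π + 1)) with hε'
  have hε'pos : 0 < ε' := by positivity
  obtain ⟨r, hr, hQr⟩ := Metric.continuousAt_iff.mp hQcont ε' hε'pos
  set G : ℝ → ℝ := fun δ =>
    arctan ((x₀ + r - a δ) / c δ) - arctan ((x₀ - r - a δ) / c δ) with hGdef
  have hG : Tendsto G l (nhds π) := by
    have hcc : Tendsto c l (nhdsWithin 0 (Ioi 0)) :=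
      tendsto_nhdsWithin_iff.mpr ⟨hc, hcpos⟩
    have hcinv : Tendsto (fun δ => (c δ)⁻¹) l atTop := tendsto_inv_nhdsGT_zero.comp hcc
    have hnum1 : Tendsto (fun δ => x₀ + r - a δ) l (nhds r) := by
      have := (tendsto_const_nhds (x := x₀ + r) (f := l)).sub ha
      simpa using this
    have hnum2 : Tendsto (fun δ => x₀ - r - a δ) l (nhds (-r)) := by
      have := (tendsto_const_nhds (x := x₀ - r) (f := l)).sub ha
      simpa using this
    have h1 : Tendsto (fun δ => (x₀ + r - a δ) / c δ) l atTop := by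
      simp_rw [div_eq_mul_inv]
      exact Tendsto.pos_mul_atTop hr hnum1 hcinv
    have h2 : Tendsto (fun δ => (x₀ - r - a δ) / c δ) l atBot := by
      simp_rw [div_eq_mul_inv]
      exact Tendsto.neg_mul_atTop (by linarith) hnum2 hcinv
    have hA := (tendsto_arctan_atTop.comp h1).mono_right nhdsWithin_le_nhds
    have hB := (tendsto_arctan_atBot.comp h2).mono_right nhdsWithin_le_nhds
    have hπ2 : π = π / 2 - -(π / 2) := by ring
    rw [hπ2]
    exact hA.sub hB
  have E2 : ∀ᶠ δ in l, |a δ - x₀| < r / 2 := by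
    have := Metric.tendsto_nhds.mp ha (r / 2) (by positivity)
    simpa [Real.dist_eq] using this
  have E3 : ∀ᶠ δ in l, 4 * c δ / r ^ 2 * M < ε / 4 := by
    have h0 : Tendsto (fun δ => 4 * c δ / r ^ 2 * M) l (nhds 0) := by
      have := ((hc.const_mul (4 : ℝ)).div_const (r ^ 2)).mul_const M
      simpa using this
    exact h0.eventually_lt_const (by positivity)
  have E4 : ∀ᶠ δ in l, |Q x₀| * |G δ - π| < ε / 4 := by
    have h0 : Tendsto (fun δ => |Q x₀| * |G δ - π|) l (nhds 0) := by
      have h1 : Tendsto (fun δ => G δ - π) l (nhds 0) := by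
        simpa using hG.sub_const π
      have := (h1.abs).const_mul |Q x₀|
      simpa using this
    exact h0.eventually_lt_const (by positivity)
  filter_upwards [hcpos, E2, E3, E4] with δ h1 h2 h3 h4
  set A := a δ with hA'
  set C := c δ with hC'
  set P : ℝ → ℝ := fun t => C / ((A - t) ^ 2 + C ^ 2) with hPdef
  have hCpos : 0 < C := h1
  have hden : ∀ t : ℝ, 0 < (A - t) ^ 2 + C ^ 2 := fun t => by positivity
  have hPcont : Continuous P :=
    continuous_const.div (by continuity) fun t => (hden t).ne'
  have hPnonneg : ∀ t, 0 ≤ P t := fun t => div_nonneg hCpos.le (hden t).le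
  have hPle : ∀ t, ‖P t‖ ≤ C⁻¹ := by
    intro t
    rw [Real.norm_eq_abs, abs_of_nonneg (hPnonneg t)]
    have h5 : C ^ 2 ≤ (A - t) ^ 2 + C ^ 2 := by nlinarith [sq_nonneg (A - t)]
    have h6 : C / ((A - t) ^ 2 + C ^ 2) ≤ C / C ^ 2 :=
      div_le_div_of_nonneg_left hCpos.le (by positivity) h5
    have h7 : C / C ^ 2 = C⁻¹ := by
      rw [sq, ← div_div, div_self hCpos.ne', one_div]
    exact h7 ▸ h6
  have hPQ : Integrable (fun t => P t * Q t) :=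
    hQint.bdd_mul hPcont.aestronglyMeasurable (ae_of_all _ hPle)
  set s : Set ℝ := Ioo (x₀ - r) (x₀ + r) with hsdef
  have hs : MeasurableSet s := measurableSet_Ioo
  have huv : x₀ - r ≤ x₀ + r := by linarith
  have hPs : IntegrableOn P s :=
    (intervalIntegrable_iff_integrableOn_Ioo_of_le huv).mp
      (hPcont.intervalIntegrable _ _)
  have hPQs : IntegrableOn (fun t => P t * Q t) s := hPQ.integrableOn
  have hsub : IntegrableOn (fun t => P t * (Q t - Q x₀)) s := by
    have heq : (fun t => P t * (Q t - Q x₀)) = fun t => P t * Q t - Q x₀ * P t := by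
      funext t; ring
    rw [heq]
    exact hPQs.sub (hPs.const_mul _)
  have hsplit : (∫ t, P t * Q t)
      = (∫ t in s, P t * Q t) + ∫ t in sᶜ, P t * Q t :=
    (integral_add_compl hs hPQ).symm
  have hsdecomp : (∫ t in s, P t * Q t)
      = (∫ t in s, P t * (Q t - Q x₀)) + Q x₀ * ∫ t in s, P t := by
    rw [← MeasureTheory.integral_const_mul, ← integral_add hsub (hPs.const_mul _)]
    congr 1
    funext t
    ring
  have hsP : (∫ t in s, P t) = G δ := by
    rw [hsdef, hPdef]
    have := poisson_arctan (a := A) (c := C) hCpos (x₀ - r) (x₀ + r) huv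
    rw [this, hGdef]
  have hGle : (∫ t in s, P t) ≤ π := by
    rw [hsP, hGdef]
    have ha1 := arctan_lt_pi_div_two ((x₀ + r - A) / C)
    have ha2 := neg_pi_div_two_lt_arctan ((x₀ - r - A) / C)
    simp only []
    linarith
  have hsPnonneg : 0 ≤ ∫ t in s, P t :=
    setIntegral_nonneg hs fun t _ => hPnonneg t
  -- Bound A
  have hbA : |∫ t in s, P t * (Q t - Q x₀)| ≤ ε' * π := by
    have step1 : |∫ t in s, P t * (Q t - Q x₀)| ≤ ∫ t in s, |P t * (Q t - Q x₀)| := by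
      have := norm_integral_le_integral_norm (μ := volume.restrict s)
          (fun t => P t * (Q t - Q x₀))
      simp only [Real.norm_eq_abs] at this
      exact this
    have step2 : (∫ t in s, |P t * (Q t - Q x₀)|) ≤ ∫ t in s, P t * ε' := by
      refine setIntegral_mono_on hsub.abs (hPs.mul_const ε') hs fun t ht => ?_
      rw [abs_mul, abs_of_nonneg (hPnonneg t)]
      refine mul_le_mul_of_nonneg_left ?_ (hPnonneg t)
      have hdist : dist t x₀ < r := by
        rw [Real.dist_eq, abs_lt]
        exact ⟨by linarith [ht.1], by linarith [ht.2]⟩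
      have := hQr hdist
      rw [Real.dist_eq] at this
      exact this.le
    have step3 : (∫ t in s, P t * ε') = (∫ t in s, P t) * ε' :=
      integral_mul_const ε' P
    calc |∫ t in s, P t * (Q t - Q x₀)| ≤ ∫ t in s, P t * ε' := step1.trans step2
      _ = (∫ t in s, P t) * ε' := step3
      _ ≤ π * ε' := mul_le_mul_of_nonneg_right hGle hε'pos.le
      _ = ε' * π := mul_comm _ _
  -- Bound C
  have hbC : |∫ t in sᶜ, P t * Q t| ≤ 4 * C / r ^ 2 * M := by
    have hbnd : ∀ t ∈ sᶜ, |P t * Q t| ≤ 4 * C / r ^ 2 * |Q t| := by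
      intro t ht
      have hts : ¬(x₀ - r < t ∧ t < x₀ + r) := by
        simpa [hsdef, mem_Ioo] using ht
      have habs : r / 2 ≤ |A - t| := by
        rcases not_and_or.mp hts with h | h
        · push_neg at h
          have : t ≤ A - r / 2 := by
            have := abs_lt.mp h2
            linarith [this.1, this.2]
          calc r / 2 ≤ A - t := by linarith
            _ ≤ |A - t| := le_abs_self _
        · push_neg at h
          have : A + r / 2 ≤ t := by
            have := abs_lt.mp h2
            linarith [this.1, this.2]
          calc r / 2 ≤ t - A := by linarith
            _ ≤ |A - t| := by rw [abs_sub_comm]; exact le_abs_self _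
      have hsq : (r / 2) ^ 2 ≤ (A - t) ^ 2 := by
        have := pow_le_pow_left₀ (by positivity) habs 2
        simpa [sq_abs] using this
      have hPbnd : P t ≤ 4 * C / r ^ 2 := by
        have h5 : (r / 2) ^ 2 ≤ (A - t) ^ 2 + C ^ 2 := by nlinarith [sq_nonneg C]
        have h6 : C / ((A - t) ^ 2 + C ^ 2) ≤ C / (r / 2) ^ 2 :=
          div_le_div_of_nonneg_left hCpos.le (by positivity) h5
        have h7 : C / (r / 2) ^ 2 = 4 * C / r ^ 2 := by
          field_simp
          ring
        exact h7 ▸ h6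
      rw [abs_mul, abs_of_nonneg (hPnonneg t)]
      exact mul_le_mul_of_nonneg_right hPbnd (abs_nonneg _)
    have step1 : |∫ t in sᶜ, P t * Q t| ≤ ∫ t in sᶜ, |P t * Q t| := by
      have := norm_integral_le_integral_norm (μ := volume.restrict sᶜ)
          (fun t => P t * Q t)
      simp only [Real.norm_eq_abs] at this
      exact this
    have step2 : (∫ t in sᶜ, |P t * Q t|) ≤ ∫ t in sᶜ, 4 * C / r ^ 2 * |Q t| :=
      setIntegral_mono_on hPQ.abs.integrableOn
        ((hQint.abs.const_mul _).integrableOn) hs.compl hbnd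
    have step3 : (∫ t in sᶜ, 4 * C / r ^ 2 * |Q t|) ≤ ∫ t, 4 * C / r ^ 2 * |Q t| :=
      setIntegral_le_integral (hQint.abs.const_mul _)
        (ae_of_all _ fun t => by positivity)
    have step4 : (∫ t, 4 * C / r ^ 2 * |Q t|) = 4 * C / r ^ 2 * M :=
      MeasureTheory.integral_const_mul _ _
    linarith
  -- conclusion
  rw [Real.dist_eq]
  have hkey : (∫ t, P t * Q t) - π * Q x₀
      = (∫ t in s, P t * (Q t - Q x₀)) + Q x₀ * ((∫ t in s, P t) - π)
        + ∫ t in sᶜ, P t * Q t := by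
    rw [hsplit, hsdecomp]
    ring
  have htri : |(∫ t, P t * Q t) - π * Q x₀|
      ≤ |∫ t in s, P t * (Q t - Q x₀)| + |Q x₀ * ((∫ t in s, P t) - π)|
        + |∫ t in sᶜ, P t * Q t| := by
    rw [hkey]
    exact (abs_add_le _ _).trans (add_le_add (abs_add_le _ _) le_rfl)
  have hmid : |Q x₀ * ((∫ t in s, P t) - π)| < ε / 4 := by
    rw [abs_mul, hsP]
    exact h4
  have hε'π : ε' * π < ε / 4 := by
    have hne : (4 : ℝ) * (π + 1) ≠ 0 := by positivity
    have heq : ε' * (π + 1) = ε / 4 := by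
      rw [hε']
      field_simp
    nlinarith
  have : |(∫ t, P t * Q t) - π * Q x₀| < ε := by
    have h3' : |∫ t in sᶜ, P t * Q t| < ε / 4 := lt_of_le_of_lt hbC h3
    linarith
  exact this

lemma lamPlasmon_eq (εc : ℝ) (hεc : εc ≠ 1) (δ : ℝ) :
    lamPlasmon εc δ =
      Complex.ofReal ((εc ^ 2 - 1 + δ ^ 2) / (2 * ((εc - 1) ^ 2 + δ ^ 2)))
        - Complex.I * Complex.ofReal (δ / ((εc - 1) ^ 2 + δ ^ 2)) := by
  have hS0 : 0 < (εc - 1) ^ 2 + δ ^ 2 := by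
    have h1 : εc - 1 ≠ 0 := sub_ne_zero.mpr hεc
    have h2 : 0 < (εc - 1) ^ 2 := by
      rcases lt_or_gt_of_ne h1 with h | h
      · nlinarith
      · nlinarith
    nlinarith [sq_nonneg δ]
  have hS : (εc - 1) ^ 2 + δ ^ 2 ≠ 0 := hS0.ne'
  have hD : (2 * ((εc : ℂ) - 1) + 2 * Complex.I * δ) ≠ 0 := by
    intro h
    have hre := congrArg Complex.re h
    have him := congrArg Complex.im h
    simp [Complex.add_re, Complex.add_im] at hre him
    exact hεc (by linarith [sub_eq_zero.mp hre])
  rw [lamPlasmon, div_eq_iff hD, Complex.ext_iff]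
  constructor
  · simp only [Complex.add_re, Complex.add_im, Complex.mul_re, Complex.mul_im,
      Complex.sub_re, Complex.sub_im, Complex.ofReal_re, Complex.ofReal_im,
      Complex.I_re, Complex.I_im, Complex.one_re, Complex.one_im,
      Complex.re_ofNat, Complex.im_ofNat]
    field_simp
    ring
  · simp only [Complex.add_re, Complex.add_im, Complex.mul_re, Complex.mul_im,
      Complex.sub_re, Complex.sub_im, Complex.ofReal_re, Complex.ofReal_im,
      Complex.I_re, Complex.I_im, Complex.one_re, Complex.one_im,
      Complex.re_ofNat, Complex.im_ofNat]
    field_simp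
    ring

lemma lamPlasmon_norm_sq (εc : ℝ) (hεc : εc ≠ 1) (δ t : ℝ) :
    ‖lamPlasmon εc δ - (t : ℂ)‖ ^ 2 =
      ((εc ^ 2 - 1 + δ ^ 2) / (2 * ((εc - 1) ^ 2 + δ ^ 2)) - t) ^ 2
        + (δ / ((εc - 1) ^ 2 + δ ^ 2)) ^ 2 := by
  set a := (εc ^ 2 - 1 + δ ^ 2) / (2 * ((εc - 1) ^ 2 + δ ^ 2)) with ha
  set c := δ / ((εc - 1) ^ 2 + δ ^ 2) with hc
  have h0 := lamPlasmon_eq εc hεc δ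
  rw [← ha, ← hc] at h0
  have hre : (lamPlasmon εc δ - (t : ℂ)).re = a - t := by
    rw [h0]; simp
  have him : (lamPlasmon εc δ - (t : ℂ)).im = -c := by
    rw [h0]; simp
  rw [show ‖lamPlasmon εc δ - (t : ℂ)‖ ^ 2
      = (lamPlasmon εc δ - (t : ℂ)).re ^ 2 + (lamPlasmon εc δ - (t : ℂ)).im ^ 2 by
    rw [Complex.sq_norm, Complex.normSq_apply]; ring]
  rw [hre, him]
  ring

/-- Rate of blow-up of the plasmon resonance for the crescent domain:
for `ε_c < 0`, `ε_c ≠ -1` (so that `λ₀ ∈ (-1/2,0) ∪ (0,1/2)`) and `Q ≥ 0` integrable,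
supported in `[-1/2,1/2]` and continuous at `λ₀`,
`δ‖φ^δ‖²_{-1/2} = δ ∫ Q(t)/|λ(δ)-t|² dt → π|ε_c - 1| Q(λ₀)/(1/2 - λ₀)` as `δ → 0⁺`. -/
theorem plasmon_resonance_crescent_blowup_rate
    (εc : ℝ) (hεc : εc < 0) (hεc' : εc ≠ -1)
    (Q : ℝ → ℝ) (hQnonneg : ∀ t, 0 ≤ Q t) (hQint : Integrable Q)
    (hQsupp : ∀ t : ℝ, t ∉ Icc (-(1/2) : ℝ) (1/2) → Q t = 0)
    (hQcont : ContinuousAt Q (lam0 εc)) :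
    lam0 εc ∈ Ioo (-(1/2) : ℝ) 0 ∪ Ioo (0 : ℝ) (1/2) ∧
    Tendsto
      (fun δ : ℝ =>
        δ * ∫ t in Icc (-(1/2) : ℝ) (1/2), Q t / ‖lamPlasmon εc δ - (t : ℂ)‖ ^ 2)
      (nhdsWithin 0 (Ioi 0))
      (nhds (π * |εc - 1| * Q (lam0 εc) / (1/2 - lam0 εc))) := by
  have hεc1 : εc - 1 < 0 := by linarith
  have hεne1 : εc ≠ 1 := by linarith
  have hd : 2 * (εc - 1) < 0 := by linarith
  constructor
  · rw [lam0]
    rcases lt_or_gt_of_ne hεc' with h | h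
    · right
      constructor
      · exact div_pos_of_neg_of_neg (by linarith) hd
      · rw [div_lt_iff_of_neg hd]
        linarith
    · left
      constructor
      · rw [lt_div_iff_of_neg hd]
        linarith
      · exact div_neg_of_pos_of_neg (by linarith) hd
  · set K : ℝ := (εc - 1) ^ 2 with hK
    have hKpos : 0 < K := by nlinarith [mul_pos_of_neg_of_neg hεc1 hεc1]
    set a : ℝ → ℝ := fun δ => (εc ^ 2 - 1 + δ ^ 2) / (2 * ((εc - 1) ^ 2 + δ ^ 2)) with haf
    set c : ℝ → ℝ := fun δ => δ / ((εc - 1) ^ 2 + δ ^ 2) with hcf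
    have hSpos : ∀ δ : ℝ, 0 < (εc - 1) ^ 2 + δ ^ 2 := fun δ => by
      nlinarith [sq_nonneg δ, mul_pos_of_neg_of_neg hεc1 hεc1]
    have ha : Tendsto a (nhdsWithin 0 (Ioi 0)) (nhds (lam0 εc)) := by
      have hcont : ContinuousAt a 0 := by
        apply ContinuousAt.div
        · fun_prop
        · fun_prop
        · simpa using (by nlinarith [mul_pos_of_neg_of_neg hεc1 hεc1] :
            (0:ℝ) < 2 * ((εc - 1) ^ 2 + 0 ^ 2)).ne'
      have hval : a 0 = lam0 εc := by
        show (εc ^ 2 - 1 + 0 ^ 2) / (2 * ((εc - 1) ^ 2 + 0 ^ 2)) = (εc + 1) / (2 * (εc - 1))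
        rw [div_eq_div_iff
          (by nlinarith [mul_pos_of_neg_of_neg hεc1 hεc1] :
            (0:ℝ) < 2 * ((εc - 1) ^ 2 + 0 ^ 2)).ne' (by linarith : (2:ℝ) * (εc - 1) ≠ 0)]
        ring
      have h := hcont.tendsto.mono_left
        (nhdsWithin_le_nhds : nhdsWithin (0:ℝ) (Ioi 0) ≤ nhds 0)
      rwa [hval] at h
    have hc : Tendsto c (nhdsWithin 0 (Ioi 0)) (nhds 0) := by
      have hcont : ContinuousAt c 0 := by
        apply ContinuousAt.div
        · fun_prop
        · fun_prop
        · exact (hSpos 0).ne'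
      have hval : c 0 = 0 := by
        show (0:ℝ) / ((εc - 1) ^ 2 + 0 ^ 2) = 0
        simp
      have h := hcont.tendsto.mono_left
        (nhdsWithin_le_nhds : nhdsWithin (0:ℝ) (Ioi 0) ≤ nhds 0)
      rwa [hval] at h
    have hcpos : ∀ᶠ δ in nhdsWithin (0:ℝ) (Ioi 0), 0 < c δ := by
      filter_upwards [self_mem_nhdsWithin] with δ hδ
      exact div_pos hδ (hSpos δ)
    have hpois := poisson_limit Q hQint (lam0 εc) hQcont a c ha hc hcpos
    have hKt : Tendsto (fun δ : ℝ => K + δ ^ 2) (nhdsWithin 0 (Ioi 0)) (nhds K) := by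
      have hcont : ContinuousAt (fun δ : ℝ => K + δ ^ 2) 0 := by fun_prop
      have h := hcont.tendsto.mono_left
        (nhdsWithin_le_nhds : nhdsWithin (0:ℝ) (Ioi 0) ≤ nhds 0)
      have h0 : K + (0:ℝ) ^ 2 = K := by ring
      rwa [h0] at h
    have hmain : Tendsto (fun δ : ℝ => (K + δ ^ 2) *
        ∫ t, c δ / ((a δ - t) ^ 2 + c δ ^ 2) * Q t)
        (nhdsWithin 0 (Ioi 0)) (nhds (K * (π * Q (lam0 εc)))) := hKt.mul hpois
    have hlimeq : π * |εc - 1| * Q (lam0 εc) / (1/2 - lam0 εc) = K * (π * Q (lam0 εc)) := by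
      have habs : |εc - 1| = 1 - εc := by rw [abs_of_neg hεc1]; ring
      have hne : εc - 1 ≠ 0 := sub_ne_zero.mpr hεne1
      have hne' : (1:ℝ) - εc ≠ 0 := by linarith
      have h12 : (1/2 : ℝ) - lam0 εc = 1 / (1 - εc) := by
        rw [lam0]
        field_simp
        ring
      rw [habs, h12, hK, one_div, div_eq_mul_inv, inv_inv]
      ring
    rw [hlimeq]
    refine Tendsto.congr' ?_ hmain
    filter_upwards [self_mem_nhdsWithin] with δ hδ
    have hδpos : (0:ℝ) < δ := hδ
    have hcδ : 0 < c δ := div_pos hδpos (hSpos δ)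
    have hnorm : ∀ t : ℝ, Q t / ‖lamPlasmon εc δ - (t : ℂ)‖ ^ 2
        = Q t / ((a δ - t) ^ 2 + c δ ^ 2) := by
      intro t
      rw [lamPlasmon_norm_sq εc hεne1 δ t]
    have hfull : (∫ t in Icc (-(1/2) : ℝ) (1/2), Q t / ((a δ - t) ^ 2 + c δ ^ 2))
        = ∫ t, Q t / ((a δ - t) ^ 2 + c δ ^ 2) := by
      apply setIntegral_eq_integral_of_forall_compl_eq_zero
      intro t ht
      rw [hQsupp t ht, zero_div]
    have hpull : (∫ t, c δ / ((a δ - t) ^ 2 + c δ ^ 2) * Q t)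
        = c δ * ∫ t, Q t / ((a δ - t) ^ 2 + c δ ^ 2) := by
      rw [← MeasureTheory.integral_const_mul]
      congr 1
      funext t
      ring
    have hKc : (K + δ ^ 2) * c δ = δ := by
      rw [hcf, hK]
      field_simp
    calc (K + δ ^ 2) * ∫ t, c δ / ((a δ - t) ^ 2 + c δ ^ 2) * Q t
        = (K + δ ^ 2) * (c δ * ∫ t, Q t / ((a δ - t) ^ 2 + c δ ^ 2)) := by rw [hpull]
      _ = δ * ∫ t, Q t / ((a δ - t) ^ 2 + c δ ^ 2) := by rw [← mul_assoc, hKc]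
      _ = δ * ∫ t in Icc (-(1/2) : ℝ) (1/2), Q t / ((a δ - t) ^ 2 + c δ ^ 2) := by rw [hfull]
      _ = δ * ∫ t in Icc (-(1/2) : ℝ) (1/2), Q t / ‖lamPlasmon εc δ - (t : ℂ)‖ ^ 2 := by
          congr 1
          refine setIntegral_congr_fun measurableSet_Icc fun t _ => ?_
          rw [hnorm t]
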